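/- arXiv:1104.2049 — 6 statements merged into one kernel-verified Lean document; each statement's English description precedes it below -/
import Mathlib

section
/- For any integers N ≥ 1 and K ≥ 1, any real ρ > 0, and any matrix v̄ ∈ ℝ₊^{N×K} with nonnegative entries, the fixed-point system t_i = ( ρ + (1/K)·Σ_{j=1}^{K} v̄_{ij} / (1 + (1/K)·Σ_{k=1}^{N} v̄_{kj}·t_k) )^{-1}, for i = 1,…,N, admits exactly one solution t = (t_1,…,t_N) ∈ ℝ^N with t_i > 0 for all i. -/
open Finset

section Aux

variable {N K : ℕ}

/-- The fixed-point map. -/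
noncomputable def Ffp (K : ℕ) (ρ : ℝ) (v : Fin N → Fin K → ℝ) (t : Fin N → ℝ) (i : Fin N) : ℝ :=
  (ρ + (1 / (K : ℝ)) * ∑ j, v i j / (1 + (1 / (K : ℝ)) * ∑ k, v k j * t k))⁻¹

lemma Dfp_one_le (v : Fin N → Fin K → ℝ) (hv : ∀ i j, 0 ≤ v i j)
    (t : Fin N → ℝ) (ht : ∀ k, 0 ≤ t k) (j : Fin K) :
    (1 : ℝ) ≤ 1 + (1 / (K : ℝ)) * ∑ k, v k j * t k := by
  have h1 : 0 ≤ ∑ k, v k j * t k :=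
    Finset.sum_nonneg fun k _ => mul_nonneg (hv k j) (ht k)
  have h2 : 0 ≤ (1 / (K : ℝ)) := by positivity
  nlinarith

lemma Sfp_nonneg (v : Fin N → Fin K → ℝ) (hv : ∀ i j, 0 ≤ v i j)
    (t : Fin N → ℝ) (ht : ∀ k, 0 ≤ t k) (i : Fin N) :
    0 ≤ (1 / (K : ℝ)) * ∑ j, v i j / (1 + (1 / (K : ℝ)) * ∑ k, v k j * t k) := by
  apply mul_nonneg (by positivity)
  apply Finset.sum_nonneg
  intro j _
  exact div_nonneg (hv i j) (by linarith [Dfp_one_le v hv t ht j])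

lemma Ffp_pos (ρ : ℝ) (hρ : 0 < ρ) (v : Fin N → Fin K → ℝ) (hv : ∀ i j, 0 ≤ v i j)
    (t : Fin N → ℝ) (ht : ∀ k, 0 ≤ t k) (i : Fin N) : 0 < Ffp K ρ v t i := by
  have := Sfp_nonneg v hv t ht i
  unfold Ffp
  positivity

lemma Ffp_le (ρ : ℝ) (hρ : 0 < ρ) (v : Fin N → Fin K → ℝ) (hv : ∀ i j, 0 ≤ v i j)
    (t : Fin N → ℝ) (ht : ∀ k, 0 ≤ t k) (i : Fin N) : Ffp K ρ v t i ≤ ρ⁻¹ := by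
  have := Sfp_nonneg v hv t ht i
  exact inv_anti₀ hρ (by linarith)

lemma Ffp_mono (ρ : ℝ) (hρ : 0 < ρ) (v : Fin N → Fin K → ℝ) (hv : ∀ i j, 0 ≤ v i j)
    (t s : Fin N → ℝ) (ht : ∀ k, 0 ≤ t k) (hts : ∀ k, t k ≤ s k) (i : Fin N) :
    Ffp K ρ v t i ≤ Ffp K ρ v s i := by
  have hs : ∀ k, 0 ≤ s k := fun k => (ht k).trans (hts k)
  unfold Ffp
  have hsum : (1 / (K : ℝ)) * ∑ j, v i j / (1 + (1 / (K : ℝ)) * ∑ k, v k j * s k)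
      ≤ (1 / (K : ℝ)) * ∑ j, v i j / (1 + (1 / (K : ℝ)) * ∑ k, v k j * t k) := by
    apply mul_le_mul_of_nonneg_left _ (by positivity)
    apply Finset.sum_le_sum
    intro j _
    apply div_le_div_of_nonneg_left (hv i j)
      (by linarith [Dfp_one_le v hv t ht j])
    have hK : 0 ≤ (1 / (K : ℝ)) := by positivity
    have : ∑ k, v k j * t k ≤ ∑ k, v k j * s k :=
      Finset.sum_le_sum fun k _ => mul_le_mul_of_nonneg_left (hts k) (hv k j)
    nlinarith
  have hpos : 0 < ρ + (1 / (K : ℝ)) * ∑ j, v i j /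
      (1 + (1 / (K : ℝ)) * ∑ k, v k j * s k) := by
    have := Sfp_nonneg v hv s hs i
    linarith
  exact inv_anti₀ hpos (add_le_add_right hsum ρ)

lemma Ffp_scale (ρ : ℝ) (hρ : 0 < ρ) (v : Fin N → Fin K → ℝ) (hv : ∀ i j, 0 ≤ v i j)
    (c : ℝ) (hc : 1 < c) (s : Fin N → ℝ) (hs : ∀ k, 0 ≤ s k) (i : Fin N) :
    Ffp K ρ v (fun k => c * s k) i < c * Ffp K ρ v s i := by
  have hc0 : 0 < c := lt_trans one_pos hc
  have hcs : ∀ k, 0 ≤ c * s k := fun k => mul_nonneg hc0.le (hs k)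
  have hS1nn : 0 ≤ (1 / (K : ℝ)) * ∑ j, v i j /
      (1 + (1 / (K : ℝ)) * ∑ k, v k j * s k) := Sfp_nonneg v hv s hs i
  have hS2nn : 0 ≤ (1 / (K : ℝ)) * ∑ j, v i j /
      (1 + (1 / (K : ℝ)) * ∑ k, v k j * (c * s k)) := Sfp_nonneg v hv _ hcs i
  have hterm : ∀ j : Fin K, v i j / (1 + (1 / (K : ℝ)) * ∑ k, v k j * s k)
      ≤ c * (v i j / (1 + (1 / (K : ℝ)) * ∑ k, v k j * (c * s k))) := by
    intro j
    have ha : 0 ≤ (1 / (K : ℝ)) * ∑ k, v k j * s k := by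
      apply mul_nonneg (by positivity)
      exact Finset.sum_nonneg fun k _ => mul_nonneg (hv k j) (hs k)
    have hsc : ∑ k, v k j * (c * s k) = c * ∑ k, v k j * s k := by
      rw [Finset.mul_sum]; exact Finset.sum_congr rfl fun k _ => by ring
    rw [hsc, mul_div_assoc']
    set a : ℝ := (1 / (K : ℝ)) * ∑ k, v k j * s k with hadef
    have h1 : (1 : ℝ) + (1 / (K : ℝ)) * (c * ∑ k, v k j * s k) = 1 + c * a := by
      rw [hadef]; ring
    rw [h1]
    have hd1 : (0 : ℝ) < 1 + a := by linarith
    have hd2 : (0 : ℝ) < 1 + c * a := by nlinarith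
    rw [div_le_div_iff₀ hd1 hd2]
    have := hv i j
    nlinarith
  have hsum : (1 / (K : ℝ)) * ∑ j, v i j / (1 + (1 / (K : ℝ)) * ∑ k, v k j * s k)
      ≤ c * ((1 / (K : ℝ)) * ∑ j, v i j /
        (1 + (1 / (K : ℝ)) * ∑ k, v k j * (c * s k))) :=
    calc (1 / (K : ℝ)) * ∑ j, v i j / (1 + (1 / (K : ℝ)) * ∑ k, v k j * s k)
        ≤ (1 / (K : ℝ)) * ∑ j, c * (v i j /
            (1 + (1 / (K : ℝ)) * ∑ k, v k j * (c * s k))) :=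
          mul_le_mul_of_nonneg_left (Finset.sum_le_sum fun j _ => hterm j)
            (by positivity)
      _ = c * ((1 / (K : ℝ)) * ∑ j, v i j /
            (1 + (1 / (K : ℝ)) * ∑ k, v k j * (c * s k))) := by
          rw [← Finset.mul_sum]; ring
  simp only [Ffp]
  set S1 : ℝ := (1 / (K : ℝ)) * ∑ j, v i j /
      (1 + (1 / (K : ℝ)) * ∑ k, v k j * s k) with hS1def
  set S2 : ℝ := (1 / (K : ℝ)) * ∑ j, v i j /
      (1 + (1 / (K : ℝ)) * ∑ k, v k j * (c * s k)) with hS2def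
  have hP : 0 < ρ + S1 := by linarith
  have hQ : 0 < ρ + S2 := by linarith
  have h1 : c * (ρ + S1)⁻¹ = ((ρ + S1) / c)⁻¹ := by
    rw [inv_div, div_eq_mul_inv]
  rw [h1]
  apply inv_strictAnti₀ (div_pos hP hc0)
  rw [div_lt_iff₀ hc0]
  nlinarith

end Aux

/-- Existence and uniqueness of a positive solution to the deterministic-equivalent
fixed-point system `t_i = (ρ + (1/K) Σ_j v̄_{ij} / (1 + (1/K) Σ_k v̄_{kj} t_k))⁻¹`. -/
theorem stmt_0 (N K : ℕ) (hN : 1 ≤ N) (hK : 1 ≤ K) (ρ : ℝ) (hρ : 0 < ρ)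
    (v : Fin N → Fin K → ℝ) (hv : ∀ i j, 0 ≤ v i j) :
    ∃! t : Fin N → ℝ, (∀ i, 0 < t i) ∧
      ∀ i, t i = (ρ + (1 / (K : ℝ)) * ∑ j, v i j /
        (1 + (1 / (K : ℝ)) * ∑ k, v k j * t k))⁻¹ := by
  haveI : Nonempty (Fin N) := ⟨⟨0, by omega⟩⟩
  haveI : Fact ((0 : ℝ) ≤ ρ⁻¹) := ⟨(inv_pos.mpr hρ).le⟩
  -- the monotone map on the complete lattice (Fin N → Icc 0 ρ⁻¹)
  let G : (Fin N → Set.Icc (0 : ℝ) ρ⁻¹) →o (Fin N → Set.Icc (0 : ℝ) ρ⁻¹) :=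
    ⟨fun x i => ⟨Ffp K ρ v (fun k => (x k : ℝ)) i,
      ⟨(Ffp_pos ρ hρ v hv _ (fun k => (x k).2.1) i).le,
        Ffp_le ρ hρ v hv _ (fun k => (x k).2.1) i⟩⟩,
      by
        intro x y hxy i
        exact Ffp_mono ρ hρ v hv _ _ (fun k => (x k).2.1) (fun k => hxy k) i⟩
  have hfix : G G.lfp = G.lfp := G.map_lfp
  set x0 := G.lfp with hx0
  refine ⟨fun i => (x0 i : ℝ), ⟨?_, ?_⟩, ?_⟩
  · intro i
    show 0 < (x0 i : ℝ)
    have h : ((G x0 i : ℝ)) = (x0 i : ℝ) := by rw [hfix]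
    have h2 : Ffp K ρ v (fun k => (x0 k : ℝ)) i = (x0 i : ℝ) := h
    rw [← h2]
    exact Ffp_pos ρ hρ v hv _ (fun k => (x0 k).2.1) i
  · intro i
    show (x0 i : ℝ) = _
    have h : ((G x0 i : ℝ)) = (x0 i : ℝ) := by rw [hfix]
    exact h.symm
  · -- uniqueness
    rintro s ⟨hspos, hsfix⟩
    -- general lemma: any two positive fixed points satisfy t ≤ s
    have le_of_fix : ∀ t u : Fin N → ℝ, (∀ i, 0 < t i) → (∀ i, t i = Ffp K ρ v t i) →
        (∀ i, 0 < u i) → (∀ i, u i = Ffp K ρ v u i) → ∀ i, t i ≤ u i := by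
      intro t u htpos htfix hupos hufix
      have hne : (Finset.univ : Finset (Fin N)).Nonempty := Finset.univ_nonempty
      set c : ℝ := Finset.univ.sup' hne (fun i => t i / u i) with hcdef
      have hcle : ∀ i, t i ≤ c * u i := by
        intro i
        have hle : t i / u i ≤ c := by
          rw [hcdef]; exact Finset.le_sup' (fun i => t i / u i) (Finset.mem_univ i)
        calc t i = (t i / u i) * u i := (div_mul_cancel₀ (t i) (hupos i).ne').symm
          _ ≤ c * u i := mul_le_mul_of_nonneg_right hle (hupos i).le
      obtain ⟨i0, _, hi0⟩ := Finset.exists_mem_eq_sup' hne (fun i => t i / u i)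
      have hci0 : c * u i0 = t i0 := by
        rw [hcdef, hi0]; exact div_mul_cancel₀ (t i0) (hupos i0).ne'
      by_cases hc1 : c ≤ 1
      · intro i
        calc t i ≤ c * u i := hcle i
          _ ≤ 1 * u i := mul_le_mul_of_nonneg_right hc1 (hupos i).le
          _ = u i := one_mul _
      · exfalso
        push_neg at hc1
        have h1 : t i0 ≤ Ffp K ρ v (fun k => c * u k) i0 := by
          rw [htfix i0]
          exact Ffp_mono ρ hρ v hv t _ (fun k => (htpos k).le) hcle i0
        have h2 : Ffp K ρ v (fun k => c * u k) i0 < c * Ffp K ρ v u i0 :=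
          Ffp_scale ρ hρ v hv c hc1 u (fun k => (hupos k).le) i0
        have h3 : c * Ffp K ρ v u i0 = t i0 := by rw [← hufix i0]; exact hci0
        linarith
    have hfixx0 : ∀ i, (x0 i : ℝ) = Ffp K ρ v (fun k => (x0 k : ℝ)) i := by
      intro i
      have h : ((G x0 i : ℝ)) = (x0 i : ℝ) := by rw [hfix]
      exact h.symm
    have hx0pos : ∀ i, 0 < (x0 i : ℝ) := by
      intro i
      rw [hfixx0 i]
      exact Ffp_pos ρ hρ v hv _ (fun k => (x0 k).2.1) i
    funext i
    exact le_antisymm (le_of_fix s _ hspos hsfix hx0pos hfixx0 i)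
      (le_of_fix _ s hx0pos hfixx0 hspos hsfix i)
end

section
/- Let N ≥ 1, K ≥ 1 be integers, ρ > 0, and let I ⊆ ℝ be an open interval. Suppose v̄_{ij} : I → [0,∞) and t_i : I → (0,∞) are differentiable at τ₀ ∈ I, that t(τ) satisfies the fixed-point system t_i(τ) = ( ρ + (1/K)·Σ_{j=1}^{K} v̄_{ij}(τ)/(1 + δ_j(τ)) )^{-1} for all τ ∈ I with δ_j(τ) = (1/K)·Σ_{i=1}^{N} v̄_{ij}(τ)·t_i(τ), and that v̄'_{ij}(τ₀) > 0 for all i,j. Then the function R̄(τ) = (1/N)·[ Σ_{j=1}^{K} log(1+δ_j(τ)) − Σ_{i=1}^{N} log(ρ·t_i(τ)) − Σ_{j=1}^{K} δ_j(τ)/(1+δ_j(τ)) ] has strictly positive derivative at τ₀: R̄'(τ₀) > 0. -/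
open Finset

private lemma stmt_4_aux (k C S1 S2 D : ℝ) (hC : C ≠ 0) :
    D / C + k * (S1 / C - S2 * D / C ^ 2) - (D * C - k * S2 * D) / C ^ 2 = k * S1 / C := by
  field_simp
  ring

/-- If all entries of the variance profile have strictly positive derivative at `τ₀`,
then the deterministic equivalent `R̄(τ)` of the ergodic achievable rate has strictly
positive derivative at `τ₀`. -/
theorem stmt_4 (N K : ℕ) (hN : 1 ≤ N) (hK : 1 ≤ K) (ρ : ℝ) (hρ : 0 < ρ)
    (a b : ℝ) (τ₀ : ℝ) (hτ₀ : τ₀ ∈ Set.Ioo a b)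
    (v : Fin N → Fin K → ℝ → ℝ) (v' : Fin N → Fin K → ℝ)
    (t : Fin N → ℝ → ℝ)
    (hv_nonneg : ∀ i j, ∀ τ ∈ Set.Ioo a b, 0 ≤ v i j τ)
    (hv : ∀ i j, HasDerivAt (v i j) (v' i j) τ₀)
    (hv'_pos : ∀ i j, 0 < v' i j)
    (ht_diff : ∀ i, DifferentiableAt ℝ (t i) τ₀)
    (ht_pos : ∀ i, ∀ τ ∈ Set.Ioo a b, 0 < t i τ)
    (ht_fix : ∀ τ ∈ Set.Ioo a b, ∀ i, t i τ =
      (ρ + (1 / (K : ℝ)) * ∑ j, v i j τ /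
        (1 + (1 / (K : ℝ)) * ∑ k, v k j τ * t k τ))⁻¹) :
    ∃ d : ℝ, 0 < d ∧
      HasDerivAt (fun τ => (1 / (N : ℝ)) *
        ((∑ j, Real.log (1 + (1 / (K : ℝ)) * ∑ i, v i j τ * t i τ))
          - (∑ i, Real.log (ρ * t i τ))
          - ∑ j, ((1 / (K : ℝ)) * ∑ i, v i j τ * t i τ) /
              (1 + (1 / (K : ℝ)) * ∑ i, v i j τ * t i τ))) d τ₀ := by
  obtain ⟨ha, hb⟩ := hτ₀
  have hτ : τ₀ ∈ Set.Ioo a b := ⟨ha, hb⟩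
  have hmem : Set.Ioo a b ∈ nhds τ₀ := Ioo_mem_nhds ha hb
  have hKpos : (0:ℝ) < (K:ℝ) := by exact_mod_cast hK
  have hNpos : (0:ℝ) < (N:ℝ) := by exact_mod_cast hN
  have hKne : (K:ℝ) ≠ 0 := ne_of_gt hKpos
  haveI : Nonempty (Fin K) := ⟨⟨0, hK⟩⟩
  haveI : Nonempty (Fin N) := ⟨⟨0, hN⟩⟩
  -- positivity of 1 + δ_j
  have hc : ∀ j : Fin K, ∀ τ ∈ Set.Ioo a b,
      0 < 1 + (1/(K:ℝ)) * ∑ i, v i j τ * t i τ := by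
    intro j τ hτ'
    have h0 : 0 ≤ (1/(K:ℝ)) * ∑ i, v i j τ * t i τ := by
      apply mul_nonneg (by positivity)
      exact Finset.sum_nonneg fun i _ =>
        mul_nonneg (hv_nonneg i j τ hτ') (le_of_lt (ht_pos i τ hτ'))
    linarith
  have ht' : ∀ i, HasDerivAt (t i) (deriv (t i) τ₀) τ₀ := fun i => (ht_diff i).hasDerivAt
  -- derivative of δ_j
  have hD : ∀ j : Fin K, HasDerivAt (fun τ => (1/(K:ℝ)) * ∑ i, v i j τ * t i τ)
      ((1/(K:ℝ)) * ∑ i, (v' i j * t i τ₀ + v i j τ₀ * deriv (t i) τ₀)) τ₀ :=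
    fun j => (HasDerivAt.fun_sum fun i _ => (hv i j).mul (ht' i)).const_mul _
  set D' : Fin K → ℝ :=
    fun j => (1/(K:ℝ)) * ∑ i, (v' i j * t i τ₀ + v i j τ₀ * deriv (t i) τ₀) with hD'def
  set c : Fin K → ℝ := fun j => 1 + (1/(K:ℝ)) * ∑ i, v i j τ₀ * t i τ₀ with hcdef
  have hc0 : ∀ j, (0:ℝ) < c j := fun j => hc j τ₀ hτ
  have hcne : ∀ j, c j ≠ 0 := fun j => ne_of_gt (hc0 j)
  -- positivity of the fixed-point denominator
  have hgpos : ∀ i, ∀ τ ∈ Set.Ioo a b,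
      0 < ρ + (1/(K:ℝ)) * ∑ j, v i j τ / (1 + (1/(K:ℝ)) * ∑ k, v k j τ * t k τ) := by
    intro i τ hτ'
    have h0 : 0 ≤ (1/(K:ℝ)) * ∑ j, v i j τ / (1 + (1/(K:ℝ)) * ∑ k, v k j τ * t k τ) := by
      apply mul_nonneg (by positivity)
      exact Finset.sum_nonneg fun j _ =>
        div_nonneg (hv_nonneg i j τ hτ') (le_of_lt (hc j τ hτ'))
    linarith
  set g' : Fin N → ℝ := fun i => (1/(K:ℝ)) *
      ∑ j, (v' i j * c j - v i j τ₀ * D' j) / c j ^ 2 with hg'def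
  have hg : ∀ i, HasDerivAt
      (fun τ => ρ + (1/(K:ℝ)) * ∑ j, v i j τ / (1 + (1/(K:ℝ)) * ∑ k, v k j τ * t k τ))
      (g' i) τ₀ := by
    intro i
    exact ((HasDerivAt.fun_sum fun j _ =>
      (hv i j).div ((hD j).const_add 1) (hcne j)).const_mul _).const_add ρ
  -- derivative of t i from the fixed point
  have htd : ∀ i, deriv (t i) τ₀ = -g' i * t i τ₀ ^ 2 := by
    intro i
    have h1 : HasDerivAt (t i)
        (-g' i / (ρ + (1/(K:ℝ)) * ∑ j, v i j τ₀ /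
          (1 + (1/(K:ℝ)) * ∑ k, v k j τ₀ * t k τ₀)) ^ 2) τ₀ :=
      ((hg i).inv (ne_of_gt (hgpos i τ₀ hτ))).congr_of_eventuallyEq
        (Filter.eventuallyEq_of_mem hmem fun τ hτ' => ht_fix τ hτ' i)
    have hu := (ht' i).unique h1
    have hGt : ρ + (1/(K:ℝ)) * ∑ j, v i j τ₀ /
        (1 + (1/(K:ℝ)) * ∑ k, v k j τ₀ * t k τ₀) = (t i τ₀)⁻¹ := by
      rw [ht_fix τ₀ hτ i, inv_inv]
    have htne : t i τ₀ ≠ 0 := ne_of_gt (ht_pos i τ₀ hτ)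
    rw [hu, hGt]
    field_simp
  -- build the total derivative
  have H1 : HasDerivAt (fun τ => ∑ j, Real.log (1 + (1/(K:ℝ)) * ∑ i, v i j τ * t i τ))
      (∑ j, D' j / c j) τ₀ :=
    HasDerivAt.fun_sum fun j _ => ((hD j).const_add 1).log (hcne j)
  have H2 : HasDerivAt (fun τ => ∑ i, Real.log (ρ * t i τ))
      (∑ i, (ρ * deriv (t i) τ₀) / (ρ * t i τ₀)) τ₀ :=
    HasDerivAt.fun_sum fun i _ => ((ht' i).const_mul ρ).log
      (ne_of_gt (mul_pos hρ (ht_pos i τ₀ hτ)))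
  have H3 : HasDerivAt (fun τ => ∑ j, ((1/(K:ℝ)) * ∑ i, v i j τ * t i τ) /
        (1 + (1/(K:ℝ)) * ∑ i, v i j τ * t i τ))
      (∑ j, (D' j * c j - ((1/(K:ℝ)) * ∑ i, v i j τ₀ * t i τ₀) * D' j) / c j ^ 2) τ₀ :=
    HasDerivAt.fun_sum fun j _ => (hD j).div ((hD j).const_add 1) (hcne j)
  refine ⟨_, ?_, ((H1.sub H2).sub H3).const_mul (1/(N:ℝ))⟩
  -- now prove positivity of the derivative value
  clear_value g' c D'
  have hstep2 : ∀ i, (ρ * deriv (t i) τ₀) / (ρ * t i τ₀) = -(g' i * t i τ₀) := by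
    intro i
    rw [htd i]
    have htne : t i τ₀ ≠ 0 := ne_of_gt (ht_pos i τ₀ hτ)
    field_simp
  have hgT : ∀ i, g' i * t i τ₀ = (1/(K:ℝ)) *
      ∑ j, (t i τ₀ * v' i j / c j - t i τ₀ * v i j τ₀ * D' j / c j ^ 2) := by
    intro i
    rw [hg'def]
    rw [mul_assoc, Finset.sum_mul]
    congr 1
    apply Finset.sum_congr rfl
    intro j _
    field_simp [hcne j]
  have hmid : ∑ i, (ρ * deriv (t i) τ₀) / (ρ * t i τ₀) =
      -((1/(K:ℝ)) * ∑ j, ∑ i, (t i τ₀ * v' i j / c j - t i τ₀ * v i j τ₀ * D' j / c j ^ 2)) := by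
    rw [Finset.sum_congr rfl fun i _ => (hstep2 i).trans (by rw [hgT i])]
    rw [Finset.sum_neg_distrib]
    congr 1
    rw [← Finset.mul_sum, Finset.sum_comm]
  have key : (∑ j, D' j / c j) - (∑ i, (ρ * deriv (t i) τ₀) / (ρ * t i τ₀))
      - (∑ j, (D' j * c j - ((1/(K:ℝ)) * ∑ i, v i j τ₀ * t i τ₀) * D' j) / c j ^ 2)
      = ∑ j, (1/(K:ℝ)) * (∑ i, t i τ₀ * v' i j) / c j := by
    rw [hmid, sub_neg_eq_add, Finset.mul_sum, ← Finset.sum_add_distrib, ← Finset.sum_sub_distrib]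
    apply Finset.sum_congr rfl
    intro j _
    have hsplit : ∑ i, (t i τ₀ * v' i j / c j - t i τ₀ * v i j τ₀ * D' j / c j ^ 2)
        = (∑ i, t i τ₀ * v' i j) / c j - (∑ i, t i τ₀ * v i j τ₀) * D' j / c j ^ 2 := by
      rw [Finset.sum_sub_distrib, ← Finset.sum_div, ← Finset.sum_div, ← Finset.sum_mul]
    rw [hsplit]
    have hδ : (1/(K:ℝ)) * ∑ i, v i j τ₀ * t i τ₀ = (1/(K:ℝ)) * ∑ i, t i τ₀ * v i j τ₀ := by
      congr 1
      exact Finset.sum_congr rfl fun i _ => mul_comm _ _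
    rw [hδ]
    exact stmt_4_aux (1/(K:ℝ)) (c j) _ _ (D' j) (hcne j)
  rw [key]
  apply mul_pos (one_div_pos.mpr hNpos)
  apply Finset.sum_pos _ Finset.univ_nonempty
  intro j _
  apply div_pos _ (hc0 j)
  apply mul_pos (one_div_pos.mpr hKpos)
  apply Finset.sum_pos _ Finset.univ_nonempty
  intro i _
  exact mul_pos (ht_pos i τ₀ hτ) (hv'_pos i j)
end

section
/- Let N ≥ 1 be an integer, P > 0, L > 0, σ² ≥ 0, and let v_{ij} > 0 for 1 ≤ i,j ≤ N. For τ > 0 define ṽ_{ij}(τ) = v_{ij}(1+σ²)/(τ(P/L)v_{ij} + 1 + σ²), v̂_{ij}(τ) = τ(P/L)v_{ij}²/(τ(P/L)v_{ij} + 1 + σ²), and v̄_{ij}(τ) = v̂_{ij}(τ)/(1 + σ² + (P/L)·Σ_{ℓ=1}^{N} ṽ_{iℓ}(τ)). Assume the doubly regular condition: for every τ > 0 there is 𝒦(τ) > 0 such that (1/N)·Σ_{i=1}^{N} v̄_{ik}(τ) = 𝒦(τ) for every column k and (1/N)·Σ_{j=1}^{N} v̄_{ℓj}(τ) = 𝒦(τ)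 for every row ℓ. Define t_P(τ) = ( √(1 + (N P/L)·𝒦(τ)) − 1 )/( 2·𝒦(τ) ) and R̄(τ) = log(1 + 𝒦(τ)·t_P(τ)) − log( (L/(N P))·t_P(τ) ) − 𝒦(τ)·t_P(τ)/(1 + 𝒦(τ)·t_P(τ)). Then R̄ is strictly concave on (0,∞). -/
open Finset



lemma myStrictConcaveOn_congr {s : Set ℝ} {f g : ℝ → ℝ} (h : Set.EqOn g f s)
    (hg : StrictConcaveOn ℝ s g) : StrictConcaveOn ℝ s f := by
  refine ⟨hg.1, fun x hx y hy hxy a b ha hb hab => ?_⟩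
  have hm : a • x + b • y ∈ s := hg.1 hx hy ha.le hb.le hab
  rw [← h hx, ← h hy, ← h hm]
  exact hg.2 hx hy hxy ha hb hab

lemma myComp_strictConcaveOn {s : Set ℝ} {f G : ℝ → ℝ}
    (hf : StrictConcaveOn ℝ s f) (hmap : ∀ x ∈ s, 0 < f x)
    (hG : ConcaveOn ℝ (Set.Ioi 0) G) (hGm : StrictMonoOn G (Set.Ioi 0)) :
    StrictConcaveOn ℝ s (fun x => G (f x)) := by
  refine ⟨hf.1, fun x hx y hy hxy a b ha hb hab => ?_⟩
  have hm : a • x + b • y ∈ s := hf.1 hx hy ha.le hb.le hab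
  have hfx := hmap x hx
  have hfy := hmap y hy
  have hcomb : 0 < a • f x + b • f y := by
    simp only [smul_eq_mul]
    have h1 := mul_pos ha hfx
    have h2 := mul_pos hb hfy
    linarith
  have h1 : a • f x + b • f y < f (a • x + b • y) := hf.2 hx hy hxy ha hb hab
  have h2 : G (a • f x + b • f y) < G (f (a • x + b • y)) :=
    hGm (Set.mem_Ioi.2 hcomb) (Set.mem_Ioi.2 (hmap _ hm)) h1
  have h3 : a • G (f x) + b • G (f y) ≤ G (a • f x + b • f y) :=
    hG.2 (Set.mem_Ioi.2 hfx) (Set.mem_Ioi.2 hfy) ha.le hb.le hab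
  simp only [smul_eq_mul] at *
  linarith

lemma myCore_strictConcave {n : ℕ} (hn : 1 ≤ n) (c : Fin n → ℝ) (hc : ∀ j, 0 < c j)
    {d A B : ℝ} (hd : 0 < d) (hA : 0 < A) :
    StrictConcaveOn ℝ (Set.Ioi 0)
      (fun τ => A / (d * (1 + ∑ j, c j / (τ * c j + d))) - B) := by
  set q : Fin n → ℝ → ℝ := fun j t => c j / (t * c j + d) with hq_def
  set u : ℝ → ℝ := fun t => d * (1 + ∑ j, q j t) with hu_def
  set u1 : ℝ → ℝ := fun t => -(d * ∑ j, (q j t) ^ 2) with hu1_def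
  set u2 : ℝ → ℝ := fun t => 2 * d * ∑ j, (q j t) ^ 3 with hu2_def
  set f1 : ℝ → ℝ := fun t => -A * u1 t / (u t) ^ 2 with hf1_def
  set f2 : ℝ → ℝ := fun t => A * (2 * (u1 t) ^ 2 - u2 t * u t) / (u t) ^ 3 with hf2_def
  have huniv : (Finset.univ : Finset (Fin n)).Nonempty :=
    Finset.univ_nonempty_iff.mpr ⟨⟨0, hn⟩⟩
  -- basic positivity facts
  have hX : ∀ (j : Fin n) (t : ℝ), t ∈ Set.Ioi (0:ℝ) → 0 < t * c j + d := by
    intro j t ht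
    have := mul_pos (Set.mem_Ioi.1 ht) (hc j)
    linarith
  have hqpos : ∀ (j : Fin n) (t : ℝ), t ∈ Set.Ioi (0:ℝ) → 0 < q j t := by
    intro j t ht
    exact div_pos (hc j) (hX j t ht)
  have hupos : ∀ t ∈ Set.Ioi (0:ℝ), 0 < u t := by
    intro t ht
    have hS : 0 ≤ ∑ j, q j t := Finset.sum_nonneg fun j _ => (hqpos j t ht).le
    have : 0 < 1 + ∑ j, q j t := by linarith
    exact mul_pos hd this
  -- derivatives
  have hqd : ∀ (j : Fin n) (t : ℝ), t ∈ Set.Ioi (0:ℝ) →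
      HasDerivAt (fun s => q j s) (-(q j t) ^ 2) t := by
    intro j t ht
    have hden : HasDerivAt (fun s : ℝ => s * c j + d) (c j) t := by
      simpa using ((hasDerivAt_id t).mul_const (c j)).add_const d
    have hne : t * c j + d ≠ 0 := (hX j t ht).ne'
    have h := (hasDerivAt_const t (c j)).div hden hne
    refine h.congr_deriv ?_
    simp only [hq_def]
    field_simp <;> ring
  have hud : ∀ t ∈ Set.Ioi (0:ℝ), HasDerivAt u (u1 t) t := by
    intro t ht
    have hsum : HasDerivAt (fun s => ∑ j, q j s) (∑ j, -(q j t) ^ 2) t :=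
      HasDerivAt.fun_sum fun j _ => hqd j t ht
    have h2 := (hsum.const_add 1).const_mul d
    have heq : d * ∑ j, -(q j t) ^ 2 = u1 t := by
      simp only [hu1_def]
      rw [Finset.sum_neg_distrib]
      ring
    rw [heq] at h2
    exact h2
  have hfd : ∀ t ∈ Set.Ioi (0:ℝ),
      HasDerivAt (fun τ => A / (d * (1 + ∑ j, c j / (τ * c j + d))) - B) (f1 t) t := by
    intro t ht
    have h := ((hasDerivAt_const t A).div (hud t ht) (hupos t ht).ne').sub_const B
    have heq : (0 * u t - A * u1 t) / u t ^ 2 = f1 t := by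
      simp only [hf1_def]
      ring
    rw [heq] at h
    exact h
  have hq2d : ∀ (j : Fin n) (t : ℝ), t ∈ Set.Ioi (0:ℝ) →
      HasDerivAt (fun s => (q j s) ^ 2) (-2 * (q j t) ^ 3) t := by
    intro j t ht
    have := (hqd j t ht).fun_pow 2
    refine this.congr_deriv ?_
    ring
  have hu1d : ∀ t ∈ Set.Ioi (0:ℝ), HasDerivAt u1 (u2 t) t := by
    intro t ht
    have hsum : HasDerivAt (fun s => ∑ j, (q j s) ^ 2) (∑ j, -2 * (q j t) ^ 3) t :=
      HasDerivAt.fun_sum fun j _ => hq2d j t ht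
    have h2 := (hsum.const_mul d).neg
    have heq : -(d * ∑ j, -2 * (q j t) ^ 3) = u2 t := by
      simp only [hu2_def]
      rw [Finset.mul_sum, ← Finset.sum_neg_distrib, Finset.mul_sum]
      exact Finset.sum_congr rfl fun j _ => by ring
    rw [heq] at h2
    exact h2
  have hf1d : ∀ t ∈ Set.Ioi (0:ℝ), HasDerivAt f1 (f2 t) t := by
    intro t ht
    have hnum : HasDerivAt (fun s => -A * u1 s) (-A * u2 t) t :=
      (hu1d t ht).const_mul (-A)
    have hden : HasDerivAt (fun s => (u s) ^ 2) (2 * (u t) ^ 1 * u1 t) t :=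
      (hud t ht).pow 2
    have hne : (u t) ^ 2 ≠ 0 := pow_ne_zero 2 (hupos t ht).ne'
    have h := hnum.div hden hne
    refine h.congr_deriv ?_
    have hu0 := (hupos t ht).ne'
    simp only [hf2_def]
    field_simp <;> ring
  -- the key inequality
  have hf2neg : ∀ t ∈ Set.Ioi (0:ℝ), f2 t < 0 := by
    intro t ht
    have hu0 := hupos t ht
    have hS1 : 0 ≤ ∑ j, q j t := Finset.sum_nonneg fun j _ => (hqpos j t ht).le
    have hS3 : 0 < ∑ j, (q j t) ^ 3 :=
      Finset.sum_pos (fun j _ => pow_pos (hqpos j t ht) 3) huniv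
    have hCS : (∑ j, (q j t) ^ 2) ^ 2 ≤ (∑ j, q j t) * ∑ j, (q j t) ^ 3 := by
      have h := Finset.sum_mul_sq_le_sq_mul_sq Finset.univ
        (fun j => Real.sqrt (q j t)) (fun j => q j t * Real.sqrt (q j t))
      have e1 : ∀ j : Fin n, Real.sqrt (q j t) * (q j t * Real.sqrt (q j t)) = (q j t) ^ 2 := by
        intro j
        have hnn := (hqpos j t ht).le
        rw [show Real.sqrt (q j t) * (q j t * Real.sqrt (q j t))
            = (Real.sqrt (q j t) * Real.sqrt (q j t)) * q j t by ring,
          Real.mul_self_sqrt hnn]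
        ring
      have e2 : ∀ j : Fin n, (Real.sqrt (q j t)) ^ 2 = q j t := fun j =>
        Real.sq_sqrt (hqpos j t ht).le
      have e3 : ∀ j : Fin n, (q j t * Real.sqrt (q j t)) ^ 2 = (q j t) ^ 3 := by
        intro j
        rw [mul_pow, e2 j]
        ring
      calc (∑ j, (q j t) ^ 2) ^ 2
          = (∑ j, Real.sqrt (q j t) * (q j t * Real.sqrt (q j t))) ^ 2 := by
            congr 1; exact Finset.sum_congr rfl fun j _ => (e1 j).symm
        _ ≤ (∑ j, (Real.sqrt (q j t)) ^ 2) * ∑ j, (q j t * Real.sqrt (q j t)) ^ 2 := h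
        _ = (∑ j, q j t) * ∑ j, (q j t) ^ 3 := by
            congr 1
            · exact Finset.sum_congr rfl fun j _ => e2 j
            · exact Finset.sum_congr rfl fun j _ => e3 j
    have hkey : 2 * (u1 t) ^ 2 - u2 t * u t < 0 := by
      have expand : 2 * (u1 t) ^ 2 - u2 t * u t
          = 2 * d ^ 2 * ((∑ j, (q j t) ^ 2) ^ 2 - (1 + ∑ j, q j t) * ∑ j, (q j t) ^ 3) := by
        simp only [hu1_def, hu2_def, hu_def]
        ring
      rw [expand]
      have : (∑ j, (q j t) ^ 2) ^ 2 < (1 + ∑ j, q j t) * ∑ j, (q j t) ^ 3 := by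
        calc (∑ j, (q j t) ^ 2) ^ 2 ≤ (∑ j, q j t) * ∑ j, (q j t) ^ 3 := hCS
          _ < (1 + ∑ j, q j t) * ∑ j, (q j t) ^ 3 := by nlinarith
      exact mul_neg_of_pos_of_neg (by positivity) (by linarith)
    have hnum : A * (2 * (u1 t) ^ 2 - u2 t * u t) < 0 := mul_neg_of_pos_of_neg hA hkey
    exact div_neg_of_neg_of_pos hnum (pow_pos hu0 3)
  -- assemble via second derivative criterion
  apply strictConcaveOn_of_deriv2_neg (convex_Ioi 0)
  · intro x hx
    exact (hfd x hx).continuousAt.continuousWithinAt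
  · intro x hx
    rw [interior_Ioi] at hx
    have hev : deriv (fun τ => A / (d * (1 + ∑ j, c j / (τ * c j + d))) - B) =ᶠ[nhds x] f1 := by
      filter_upwards [Ioi_mem_nhds (Set.mem_Ioi.1 hx)] with y hy
      exact (hfd y hy).deriv
    show deriv (deriv (fun τ => A / (d * (1 + ∑ j, c j / (τ * c j + d))) - B)) x < 0
    rw [hev.deriv_eq, (hf1d x hx).deriv]
    exact hf2neg x hx

noncomputable def myG : ℝ → ℝ := fun x => 2 * Real.log (1 + x) + Real.log 4 - x / (1 + x)

lemma myG_hasDeriv : ∀ x ∈ Set.Ioi (0:ℝ), HasDerivAt myG ((1 + 2*x) / (1 + x) ^ 2) x := by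
  intro x hx
  have hx0 : (0:ℝ) < x := hx
  have h1 : (0:ℝ) < 1 + x := by linarith
  have hne : (1:ℝ) + x ≠ 0 := h1.ne'
  have hlin : HasDerivAt (fun y : ℝ => 1 + y) 1 x := (hasDerivAt_id x).const_add 1
  have hlog : HasDerivAt (fun y : ℝ => Real.log (1 + y)) (1 / (1 + x)) x := by
    simpa using hlin.log hne
  have hdiv : HasDerivAt (fun y : ℝ => y / (1 + y))
      ((1 * (1 + x) - x * 1) / (1 + x) ^ 2) x :=
    (hasDerivAt_id x).div hlin hne
  have h := ((hlog.const_mul 2).add_const (Real.log 4)).sub hdiv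
  have heq : 2 * (1 / (1 + x)) - (1 * (1 + x) - x * 1) / (1 + x) ^ 2
      = (1 + 2*x) / (1 + x) ^ 2 := by
    field_simp
    ring
  rw [heq] at h
  exact h

lemma myG_mono : StrictMonoOn myG (Set.Ioi 0) := by
  apply strictMonoOn_of_deriv_pos (convex_Ioi 0)
  · intro x hx
    exact (myG_hasDeriv x hx).continuousAt.continuousWithinAt
  · intro x hx
    rw [interior_Ioi] at hx
    rw [(myG_hasDeriv x hx).deriv]
    have hx0 : (0:ℝ) < x := hx
    positivity

lemma myG_concave : ConcaveOn ℝ (Set.Ioi 0) myG := by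
  have : StrictConcaveOn ℝ (Set.Ioi 0) myG := by
    apply strictConcaveOn_of_deriv2_neg (convex_Ioi 0)
    · intro x hx
      exact (myG_hasDeriv x hx).continuousAt.continuousWithinAt
    · intro x hx
      rw [interior_Ioi] at hx
      have hx0 : (0:ℝ) < x := hx
      have h1 : (0:ℝ) < 1 + x := by linarith
      have hd1 : ∀ y ∈ Set.Ioi (0:ℝ),
          HasDerivAt (fun z => (1 + 2*z) / (1 + z) ^ 2) (-2*y / (1 + y) ^ 3) y := by
        intro y hy
        have hy0 : (0:ℝ) < y := hy
        have h1y : (0:ℝ) < 1 + y := by linarith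
        have hney : (1:ℝ) + y ≠ 0 := h1y.ne'
        have hnum : HasDerivAt (fun z : ℝ => 1 + 2*z) 2 y := by
          simpa using ((hasDerivAt_id y).const_mul 2).const_add 1
        have hlin : HasDerivAt (fun z : ℝ => 1 + z) 1 y := (hasDerivAt_id y).const_add 1
        have hden : HasDerivAt (fun z : ℝ => (1 + z) ^ 2) (2 * (1 + y) ^ 1 * 1) y := hlin.pow 2
        have hne2 : ((1:ℝ) + y) ^ 2 ≠ 0 := pow_ne_zero 2 hney
        have h := hnum.div hden hne2
        have heq : (2 * (1 + y) ^ 2 - (1 + 2*y) * (2 * (1 + y) ^ 1 * 1)) / ((1 + y) ^ 2) ^ 2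
            = -2*y / (1 + y) ^ 3 := by
          field_simp
          ring
        rw [heq] at h
        exact h
      have hev : deriv myG =ᶠ[nhds x] (fun z => (1 + 2*z) / (1 + z) ^ 2) := by
        filter_upwards [Ioi_mem_nhds hx0] with y hy
        exact (myG_hasDeriv y hy).deriv
      show deriv (deriv myG) x < 0
      rw [hev.deriv_eq, (hd1 x hx).deriv]
      apply div_neg_of_neg_of_pos
      · linarith
      · positivity
  exact this.concaveOn

lemma myPsi_mono {c : ℝ} (hc : 0 < c) :
    StrictMonoOn (fun y => (Real.sqrt (1 + c*y) - 1) / 2) (Set.Ioi 0) := by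
  intro x hx y hy hxy
  have hx0 : (0:ℝ) < x := hx
  have h1 : (0:ℝ) ≤ 1 + c*x := by nlinarith
  have h2 : 1 + c*x < 1 + c*y := by nlinarith
  have := Real.sqrt_lt_sqrt h1 h2
  simp only []
  linarith

lemma myPsi_concave {c : ℝ} (hc : 0 < c) :
    ConcaveOn ℝ (Set.Ioi 0) (fun y => (Real.sqrt (1 + c*y) - 1) / 2) := by
  refine ⟨convex_Ioi 0, fun x hx y hy a b ha hb hab => ?_⟩
  have hx0 : (0:ℝ) < x := hx
  have hy0 : (0:ℝ) < y := hy
  have h1 : (1:ℝ) + c*x ∈ Set.Ici (0:ℝ) := by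
    simp only [Set.mem_Ici]; nlinarith
  have h2 : (1:ℝ) + c*y ∈ Set.Ici (0:ℝ) := by
    simp only [Set.mem_Ici]; nlinarith
  have hs := (Real.strictConcaveOn_sqrt.concaveOn).2 h1 h2 ha hb hab
  simp only [smul_eq_mul] at hs ⊢
  have harg : a * (1 + c*x) + b * (1 + c*y) = 1 + c * (a*x + b*y) := by
    linear_combination hab
  rw [harg] at hs
  have : a * Real.sqrt (1 + c*x) + b * Real.sqrt (1 + c*y) ≤ Real.sqrt (1 + c*(a*x+b*y)) := hs
  linarith [this, hab]

lemma myPsi_pos {c : ℝ} (hc : 0 < c) {y : ℝ} (hy : 0 < y) :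
    0 < (Real.sqrt (1 + c*y) - 1) / 2 := by
  have h1 : (1:ℝ) < Real.sqrt (1 + c*y) := by
    have h := Real.sqrt_lt_sqrt (by norm_num : (0:ℝ) ≤ 1) (by nlinarith : (1:ℝ) < 1 + c*y)
    rwa [Real.sqrt_one] at h
  linarith


set_option maxHeartbeats 2000000 in
/-- Strict concavity of the deterministic-equivalent rate `R̄(τ)` in the training
length `τ` for a doubly regular effective variance profile. Here `vbar i j τ` is the
effective variance `v̂_{ij}(τ)/(1 + σ² + (P/L) Σ_ℓ ṽ_{iℓ}(τ))` built from the MMSE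
estimate/error variances, `𝒦(τ)` is the common normalized row/column sum, and
`tP(τ)` the closed-form positive solution of the scalar fixed-point equation. -/
theorem stmt_5 (N : ℕ) (hN : 1 ≤ N) (P L σ2 : ℝ)
    (hP : 0 < P) (hL : 0 < L) (hσ2 : 0 ≤ σ2)
    (v : Fin N → Fin N → ℝ) (hv : ∀ i j, 0 < v i j)
    (vbar : Fin N → Fin N → ℝ → ℝ)
    (hvbar : ∀ i j, ∀ τ : ℝ, vbar i j τ =
      (τ * (P / L) * v i j ^ 2 / (τ * (P / L) * v i j + 1 + σ2)) /
        (1 + σ2 + (P / L) * ∑ l, v i l * (1 + σ2) / (τ * (P / L) * v i l + 1 + σ2)))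
    (𝒦 : ℝ → ℝ) (h𝒦_pos : ∀ τ > (0 : ℝ), 0 < 𝒦 τ)
    (hcol : ∀ τ > (0 : ℝ), ∀ k, (1 / (N : ℝ)) * ∑ i, vbar i k τ = 𝒦 τ)
    (hrow : ∀ τ > (0 : ℝ), ∀ l, (1 / (N : ℝ)) * ∑ j, vbar l j τ = 𝒦 τ)
    (tP : ℝ → ℝ)
    (htP : ∀ τ : ℝ, tP τ =
      (Real.sqrt (1 + ((N : ℝ) * P / L) * 𝒦 τ) - 1) / (2 * 𝒦 τ)) :
    StrictConcaveOn ℝ (Set.Ioi 0) (fun τ =>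
      Real.log (1 + 𝒦 τ * tP τ) - Real.log ((L / ((N : ℝ) * P)) * tP τ)
        - 𝒦 τ * tP τ / (1 + 𝒦 τ * tP τ)) := by
  have hN0 : (0:ℝ) < (N:ℝ) := by exact_mod_cast hN
  have hb : (0:ℝ) < P / L := div_pos hP hL
  have hd : (0:ℝ) < 1 + σ2 := by linarith
  set i0 : Fin N := ⟨0, hN⟩ with hi0
  set cfun : Fin N → ℝ := fun j => (P / L) * v i0 j with hcfun
  have hc : ∀ j : Fin N, 0 < cfun j := fun j => mul_pos hb (hv i0 j)
  have hVpos : (0:ℝ) < ∑ j, v i0 j :=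
    Finset.sum_pos (fun j _ => hv i0 j) (Finset.univ_nonempty_iff.mpr ⟨i0⟩)
  have hA : (0:ℝ) < (1 / (N:ℝ)) * ((∑ j, v i0 j) + (1 + σ2) / (P / L)) := by positivity
  -- 𝒦 agrees with a closed form on Ioi 0
  have hKform : Set.EqOn
      (fun τ => ((1 / (N:ℝ)) * ((∑ j, v i0 j) + (1 + σ2) / (P / L))) /
          ((1 + σ2) * (1 + ∑ j, cfun j / (τ * cfun j + (1 + σ2))))
        - 1 / ((N:ℝ) * (P / L))) 𝒦 (Set.Ioi 0) := by
    intro τ hτ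
    simp only [hcfun]
    have hτ0 : (0:ℝ) < τ := hτ
    have hX : ∀ j : Fin N, 0 < τ * (P / L) * v i0 j + 1 + σ2 := by
      intro j
      have := mul_pos (mul_pos hτ0 hb) (hv i0 j)
      linarith
    have hXc : ∀ j : Fin N, 0 < τ * ((P / L) * v i0 j) + (1 + σ2) := by
      intro j
      have h := hX j
      linarith [hX j, (by ring : τ * ((P / L) * v i0 j) + (1 + σ2)
        = τ * (P / L) * v i0 j + 1 + σ2)]
    obtain ⟨S, hS_def⟩ : ∃ S : ℝ, ∑ j, ((P / L) * v i0 j) / (τ * ((P / L) * v i0 j) + (1 + σ2)) = S :=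
      ⟨_, rfl⟩
    have hS0 : (0:ℝ) ≤ S := by
      rw [← hS_def]
      exact Finset.sum_nonneg fun j _ => (div_pos (hc j) (hXc j)).le
    rw [hS_def]
    have hden_pos : (0:ℝ) < (1 + σ2) * (1 + S) := by
      have : (0:ℝ) < 1 + S := by linarith
      exact mul_pos hd this
    have hDen : 1 + σ2 + (P / L) * ∑ l, v i0 l * (1 + σ2) / (τ * (P / L) * v i0 l + 1 + σ2)
        = (1 + σ2) * (1 + S) := by
      have hterm : ∀ l : Fin N, v i0 l * (1 + σ2) / (τ * (P / L) * v i0 l + 1 + σ2)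
          = ((1 + σ2) / (P / L)) *
            (((P / L) * v i0 l) / (τ * ((P / L) * v i0 l) + (1 + σ2))) := by
        intro l
        have e1 : ((1 + σ2) / (P / L)) *
            (((P / L) * v i0 l) / (τ * ((P / L) * v i0 l) + (1 + σ2)))
            = ((1 + σ2) * v i0 l) / (τ * ((P / L) * v i0 l) + (1 + σ2)) := by
          rw [mul_div_assoc']
          congr 1
          field_simp
        rw [e1, show τ * (P / L) * v i0 l + 1 + σ2 = τ * ((P / L) * v i0 l) + (1 + σ2) by ring]
        ring
      rw [Finset.sum_congr rfl fun l _ => hterm l, ← Finset.mul_sum, hS_def]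
      have hfin : P / L * ((1 + σ2) / (P / L) * S) = (1 + σ2) * S := by
        field_simp
      rw [hfin]
      ring
    have hnum : ∀ j : Fin N, τ * (P / L) * v i0 j ^ 2 / (τ * (P / L) * v i0 j + 1 + σ2)
        = v i0 j - ((1 + σ2) / (P / L)) *
            (((P / L) * v i0 j) / (τ * ((P / L) * v i0 j) + (1 + σ2))) := by
      intro j
      have e1 : ((1 + σ2) / (P / L)) *
          (((P / L) * v i0 j) / (τ * ((P / L) * v i0 j) + (1 + σ2)))
          = ((1 + σ2) * v i0 j) / (τ * ((P / L) * v i0 j) + (1 + σ2)) := by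
        rw [mul_div_assoc']
        congr 1
        field_simp
      rw [e1, eq_sub_iff_add_eq, div_add_div _ _ (hX j).ne' (hXc j).ne',
        div_eq_iff (mul_ne_zero (hX j).ne' (hXc j).ne')]
      ring
    have hsum := hrow τ hτ0 i0
    rw [← hsum]
    have hvb : ∑ j, vbar i0 j τ
        = ((∑ j, v i0 j) - ((1 + σ2) / (P / L)) * S) / ((1 + σ2) * (1 + S)) := by
      calc ∑ j, vbar i0 j τ
          = ∑ j, (τ * (P / L) * v i0 j ^ 2 / (τ * (P / L) * v i0 j + 1 + σ2))
              / ((1 + σ2) * (1 + S)) := by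
            refine Finset.sum_congr rfl fun j _ => ?_
            rw [hvbar i0 j τ, hDen]
        _ = (∑ j, τ * (P / L) * v i0 j ^ 2 / (τ * (P / L) * v i0 j + 1 + σ2))
              / ((1 + σ2) * (1 + S)) := by rw [Finset.sum_div]
        _ = ((∑ j, v i0 j) - ((1 + σ2) / (P / L)) * S) / ((1 + σ2) * (1 + S)) := by
            rw [Finset.sum_congr rfl fun j _ => hnum j, Finset.sum_sub_distrib,
              ← Finset.mul_sum, hS_def]
    rw [hvb]
    have hden_ne := hden_pos.ne'
    have h1S : (0:ℝ) < 1 + S := by linarith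
    obtain ⟨W, hW⟩ : ∃ W : ℝ, ∑ j, v i0 j = W := ⟨_, rfl⟩
    rw [hW]
    obtain ⟨D, hD⟩ : ∃ D : ℝ, (1 + σ2) * (1 + S) = D := ⟨_, rfl⟩
    have hDne : D ≠ 0 := hD ▸ hden_ne
    rw [hD]
    field_simp
    linear_combination L * hD
  have hK : StrictConcaveOn ℝ (Set.Ioi 0) 𝒦 :=
    myStrictConcaveOn_congr hKform
      (myCore_strictConcave hN cfun hc hd hA)
  have hcN : (0:ℝ) < (N:ℝ) * P / L := by positivity
  have hpsiK : StrictConcaveOn ℝ (Set.Ioi 0)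
      (fun τ => (Real.sqrt (1 + ((N:ℝ) * P / L) * 𝒦 τ) - 1) / 2) :=
    myComp_strictConcaveOn hK (fun x hx => h𝒦_pos x hx) (myPsi_concave hcN) (myPsi_mono hcN)
  have hGpsiK : StrictConcaveOn ℝ (Set.Ioi 0)
      (fun τ => myG ((Real.sqrt (1 + ((N:ℝ) * P / L) * 𝒦 τ) - 1) / 2)) :=
    myComp_strictConcaveOn hpsiK (fun x hx => myPsi_pos hcN (h𝒦_pos x hx))
      myG_concave myG_mono
  refine myStrictConcaveOn_congr ?_ hGpsiK
  intro τ hτ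
  have hk := h𝒦_pos τ hτ
  have hck : (0:ℝ) < 1 + ((N:ℝ) * P / L) * 𝒦 τ := by nlinarith
  show myG ((Real.sqrt (1 + ((N:ℝ) * P / L) * 𝒦 τ) - 1) / 2) = _
  obtain ⟨r, hr_def⟩ : ∃ r : ℝ, Real.sqrt (1 + ((N:ℝ) * P / L) * 𝒦 τ) = r := ⟨_, rfl⟩
  have hr2 : r ^ 2 = 1 + ((N:ℝ) * P / L) * 𝒦 τ := by
    rw [← hr_def]
    exact Real.sq_sqrt hck.le
  have hr1 : 1 < r := by
    rw [← hr_def]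
    have h := Real.sqrt_lt_sqrt (by norm_num : (0:ℝ) ≤ 1)
      (by nlinarith : (1:ℝ) < 1 + ((N:ℝ) * P / L) * 𝒦 τ)
    rwa [Real.sqrt_one] at h
  rw [hr_def]
  obtain ⟨s, hs_def⟩ : ∃ s : ℝ, (r - 1) / 2 = s := ⟨_, rfl⟩
  rw [hs_def]
  have hrs : r = 2 * s + 1 := by rw [← hs_def]; ring
  have hs0 : 0 < s := by rw [← hs_def]; linarith
  have hs1 : (0:ℝ) < 1 + s := by linarith
  have ht : tP τ = (r - 1) / (2 * 𝒦 τ) := by rw [htP τ, hr_def]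
  have h1 : tP τ = s / 𝒦 τ := by rw [ht, ← hs_def, div_div]
  have hkt : 𝒦 τ * tP τ = s := by
    rw [h1]
    field_simp
  have h4sL : (N:ℝ) * P * 𝒦 τ = L * (4 * s * (1 + s)) := by
    have h := hr2
    rw [hrs] at h
    have h' : L * ((2*s+1)^2) = L * (1 + (N:ℝ) * P / L * 𝒦 τ) := by rw [h]
    have hL' : L * ((N:ℝ) * P / L * 𝒦 τ) = (N:ℝ) * P * 𝒦 τ := by
      field_simp
    linear_combination -h' - hL'
  have htv : L / ((N:ℝ) * P) * tP τ = 1 / (4 * (1 + s)) := by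
    rw [h1, div_mul_div_comm]
    rw [div_eq_div_iff (by positivity) (by positivity)]
    linear_combination -h4sL
  show myG s = Real.log (1 + 𝒦 τ * tP τ) - Real.log (L / ((N:ℝ) * P) * tP τ)
      - 𝒦 τ * tP τ / (1 + 𝒦 τ * tP τ)
  rw [hkt, htv]
  have hlog : Real.log (1 / (4 * (1 + s))) = -(Real.log 4 + Real.log (1 + s)) := by
    rw [one_div, Real.log_inv, Real.log_mul (by norm_num) hs1.ne']
  rw [hlog]
  simp only [myG]
  ring
end

section
/- Let m ≥ 1 be an integer, c > 0, and for j = 1,…,m let a_j ≥ 0, b_j ≥ 0 and d_j > 0. Then the function f(τ) = 1/( c + Σ_{j=1}^{m} b_j/(a_j·τ + d_j) ) is nondecreasing and concave on [0,∞). -/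
open Finset

/-- The reciprocal whitening factor `τ ↦ 1/(c + Σ_j b_j/(a_j τ + d_j))` is
nondecreasing and concave on `[0,∞)`. -/
theorem stmt_11 (m : ℕ) (hm : 1 ≤ m) (c : ℝ) (hc : 0 < c)
    (a b d : Fin m → ℝ) (ha : ∀ j, 0 ≤ a j) (hb : ∀ j, 0 ≤ b j) (hd : ∀ j, 0 < d j) :
    MonotoneOn (fun τ : ℝ => 1 / (c + ∑ j, b j / (a j * τ + d j))) (Set.Ici 0) ∧
    ConcaveOn ℝ (Set.Ici 0) (fun τ : ℝ => 1 / (c + ∑ j, b j / (a j * τ + d j))) := by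
  -- notation
  set G : ℝ → ℝ := fun τ => c + ∑ j, b j / (a j * τ + d j) with hG
  set N : ℝ → ℝ := fun τ => ∑ j, b j * a j / (a j * τ + d j) ^ 2 with hN
  set M : ℝ → ℝ := fun τ => ∑ j, 2 * b j * a j ^ 2 / (a j * τ + d j) ^ 3 with hM
  have hx : ∀ (j : Fin m) (τ : ℝ), 0 ≤ τ → 0 < a j * τ + d j := by
    intro j τ hτ
    have := mul_nonneg (ha j) hτ
    linarith [hd j]
  have hGpos : ∀ τ : ℝ, 0 ≤ τ → 0 < G τ := by
    intro τ hτ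
    have hs : 0 ≤ ∑ j, b j / (a j * τ + d j) :=
      Finset.sum_nonneg fun j _ => div_nonneg (hb j) (hx j τ hτ).le
    simp only [hG]; linarith
  have hNnonneg : ∀ τ : ℝ, 0 ≤ τ → 0 ≤ N τ := by
    intro τ hτ
    exact Finset.sum_nonneg fun j _ =>
      div_nonneg (mul_nonneg (hb j) (ha j)) (pow_nonneg (hx j τ hτ).le 2)
  have hMnonneg : ∀ τ : ℝ, 0 ≤ τ → 0 ≤ M τ := by
    intro τ hτ
    exact Finset.sum_nonneg fun j _ =>
      div_nonneg (mul_nonneg (mul_nonneg (by norm_num) (hb j)) (sq_nonneg _))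
        (pow_nonneg (hx j τ hτ).le 3)
  -- first derivative
  have hd1 : ∀ τ : ℝ, 0 ≤ τ → HasDerivAt (fun t => 1 / G t) (N τ / (G τ) ^ 2) τ := by
    intro τ hτ
    have hGd : HasDerivAt G (-(N τ)) τ := by
      have : HasDerivAt (fun t : ℝ => ∑ j, b j / (a j * t + d j))
          (∑ j : Fin m, -(b j * a j / (a j * τ + d j) ^ 2)) τ := by
        apply HasDerivAt.fun_sum
        intro j _
        have hxj : HasDerivAt (fun t : ℝ => a j * t + d j) (a j) τ :=
          by simpa using ((hasDerivAt_id τ).const_mul (a j)).add_const (d j)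
        have := (hasDerivAt_const τ (b j)).fun_div hxj (ne_of_gt (hx j τ hτ))
        refine this.congr_deriv ?_
        field_simp
        ring
      have h2 := this.const_add c
      refine h2.congr_deriv ?_
      simp only [hN, Finset.sum_neg_distrib]
    have h3 := (hasDerivAt_const τ (1 : ℝ)).fun_div hGd (ne_of_gt (hGpos τ hτ))
    refine h3.congr_deriv ?_
    field_simp
    ring
  -- derivative of the first derivative
  have hd2 : ∀ τ : ℝ, 0 ≤ τ →
      HasDerivAt (fun t => N t / (G t) ^ 2)
        ((-(M τ) * (G τ) ^ 2 - N τ * (2 * G τ * (-(N τ)))) / ((G τ) ^ 2) ^ 2) τ := by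
    intro τ hτ
    have hGd : HasDerivAt G (-(N τ)) τ := by
      have : HasDerivAt (fun t : ℝ => ∑ j, b j / (a j * t + d j))
          (∑ j : Fin m, -(b j * a j / (a j * τ + d j) ^ 2)) τ := by
        apply HasDerivAt.fun_sum
        intro j _
        have hxj : HasDerivAt (fun t : ℝ => a j * t + d j) (a j) τ :=
          by simpa using ((hasDerivAt_id τ).const_mul (a j)).add_const (d j)
        have := (hasDerivAt_const τ (b j)).fun_div hxj (ne_of_gt (hx j τ hτ))
        refine this.congr_deriv ?_
        field_simp
        ring
      have h2 := this.const_add c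
      refine h2.congr_deriv ?_
      simp only [hN, Finset.sum_neg_distrib]
    have hNd : HasDerivAt N (-(M τ)) τ := by
      have : HasDerivAt (fun t : ℝ => ∑ j, b j * a j / (a j * t + d j) ^ 2)
          (∑ j : Fin m, -(2 * b j * a j ^ 2 / (a j * τ + d j) ^ 3)) τ := by
        apply HasDerivAt.fun_sum
        intro j _
        have hxj : HasDerivAt (fun t : ℝ => a j * t + d j) (a j) τ :=
          by simpa using ((hasDerivAt_id τ).const_mul (a j)).add_const (d j)
        have hx2 : HasDerivAt (fun t : ℝ => (a j * t + d j) ^ 2)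
            (2 * (a j * τ + d j) ^ 1 * a j) τ := hxj.pow 2
        have hx2' : ((a j * τ + d j) ^ 2) ≠ 0 := pow_ne_zero 2 (ne_of_gt (hx j τ hτ))
        have := (hasDerivAt_const τ (b j * a j)).fun_div hx2 hx2'
        refine this.congr_deriv ?_
        have hxne := ne_of_gt (hx j τ hτ)
        field_simp
        ring
      refine this.congr_deriv ?_
      simp only [hM, Finset.sum_neg_distrib]
    have hG2 : HasDerivAt (fun t => (G t) ^ 2) (2 * G τ * (-(N τ))) τ := by
      have := hGd.fun_pow 2
      refine this.congr_deriv ?_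
      ring
    have hG2ne : ((G τ) ^ 2) ≠ 0 := pow_ne_zero 2 (ne_of_gt (hGpos τ hτ))
    exact hNd.div hG2 hG2ne
  -- Cauchy–Schwarz: 2 N² ≤ M G
  have key : ∀ τ : ℝ, 0 ≤ τ → 2 * (N τ) ^ 2 ≤ M τ * G τ := by
    intro τ hτ
    have hcs : (N τ) ^ 2 ≤ (∑ j, b j / (a j * τ + d j)) *
        ∑ j, b j * a j ^ 2 / (a j * τ + d j) ^ 3 := by
      apply Finset.sum_sq_le_sum_mul_sum_of_sq_eq_mul
      · intro j _
        exact div_nonneg (hb j) (hx j τ hτ).le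
      · intro j _
        exact div_nonneg (mul_nonneg (hb j) (sq_nonneg _)) (pow_nonneg (hx j τ hτ).le 3)
      · intro j _
        have hxne := ne_of_gt (hx j τ hτ)
        field_simp
    have hM2 : M τ = 2 * ∑ j, b j * a j ^ 2 / (a j * τ + d j) ^ 3 := by
      simp only [hM, Finset.mul_sum]
      apply Finset.sum_congr rfl
      intro j _
      ring
    have hS2 : 0 ≤ ∑ j, b j * a j ^ 2 / (a j * τ + d j) ^ 3 :=
      Finset.sum_nonneg fun j _ =>
        div_nonneg (mul_nonneg (hb j) (sq_nonneg _)) (pow_nonneg (hx j τ hτ).le 3)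
    have hGc : ∑ j, b j / (a j * τ + d j) = G τ - c := by simp [hG]
    rw [hGc] at hcs
    rw [hM2]
    nlinarith [hcs, mul_nonneg hS2 hc.le]
  -- second derivative nonpositive
  have hsnd : ∀ τ : ℝ, 0 ≤ τ →
      (-(M τ) * (G τ) ^ 2 - N τ * (2 * G τ * (-(N τ)))) / ((G τ) ^ 2) ^ 2 ≤ 0 := by
    intro τ hτ
    apply div_nonpos_of_nonpos_of_nonneg
    · have hkey := key τ hτ
      have hGp := hGpos τ hτ
      nlinarith
    · positivity
  have hcont : ContinuousOn (fun τ : ℝ => 1 / G τ) (Set.Ici 0) := by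
    intro τ hτ
    exact ((hd1 τ hτ).continuousAt).continuousWithinAt
  have hint : interior (Set.Ici (0:ℝ)) = Set.Ioi 0 := interior_Ici
  constructor
  · apply monotoneOn_of_deriv_nonneg (convex_Ici 0) hcont
    · rw [hint]
      intro τ hτ
      exact ((hd1 τ (le_of_lt hτ)).differentiableAt).differentiableWithinAt
    · rw [hint]
      intro τ hτ
      have hders : ∀ t ∈ Set.Ioi (0:ℝ), HasDerivAt (fun t => 1 / G t) (N t / (G t) ^ 2) t :=
        fun t ht => hd1 t (le_of_lt ht)
      rw [HasDerivAt.deriv (hd1 τ (le_of_lt hτ))]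
      exact div_nonneg (hNnonneg τ (le_of_lt hτ)) (sq_nonneg _)
  · apply concaveOn_of_hasDerivWithinAt2_nonpos (convex_Ici 0) hcont
      (f' := fun t => N t / (G t) ^ 2)
      (f'' := fun t => (-(M t) * (G t) ^ 2 - N t * (2 * G t * (-(N t)))) / ((G t) ^ 2) ^ 2)
    · rw [hint]
      intro τ hτ
      exact (hd1 τ (le_of_lt hτ)).hasDerivWithinAt
    · rw [hint]
      intro τ hτ
      exact (hd2 τ (le_of_lt hτ)).hasDerivWithinAt
    · rw [hint]
      intro τ hτ
      exact hsnd τ (le_of_lt hτ)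
end

section
/- Let n ≥ 1 be an integer, a > 0, c > 0, γ > 0, β > 0, and v_1,…,v_n > 0. Define u(τ) = Σ_{j=1}^{n} v_j·c/(τ·a·v_j + c) for τ ≥ 0 and S = Σ_{j=1}^{n} v_j. Then the function 𝒦(τ) = ( S − u(τ) )/( γ + β·u(τ) ) is strictly increasing and concave on [0,∞), and satisfies 𝒦(0) = 0 and 𝒦(τ) > 0 for all τ > 0. -/
open Finset

private lemma hasDerivAt_u' (n : ℕ) (a c : ℝ) (v : Fin n → ℝ) (τ : ℝ)
    (hx : ∀ j, τ * a * v j + c ≠ 0) :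
    HasDerivAt (fun t : ℝ => ∑ j, v j * c / (t * a * v j + c))
      (-∑ j, a * c * v j ^ 2 / (τ * a * v j + c) ^ 2) τ := by
  have h : ∀ j ∈ Finset.univ, HasDerivAt (fun t : ℝ => v j * c / (t * a * v j + c))
      (-(a * c * v j ^ 2 / (τ * a * v j + c) ^ 2)) τ := by
    intro j _
    have hden : HasDerivAt (fun t : ℝ => t * a * v j + c) (1 * a * v j) τ :=
      (((hasDerivAt_id τ).mul_const a).mul_const (v j)).add_const c
    have h2 := (hasDerivAt_const τ (v j * c)).fun_div hden (hx j)
    refine h2.congr_deriv ?_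
    ring
  have := HasDerivAt.fun_sum h
  simpa [Finset.sum_neg_distrib] using this

private lemma hasDerivAt_W' (n : ℕ) (a c : ℝ) (v : Fin n → ℝ) (τ : ℝ)
    (hx : ∀ j, τ * a * v j + c ≠ 0) :
    HasDerivAt (fun t : ℝ => ∑ j, a * c * v j ^ 2 / (t * a * v j + c) ^ 2)
      (-∑ j, 2 * a ^ 2 * c * v j ^ 3 / (τ * a * v j + c) ^ 3) τ := by
  have h : ∀ j ∈ Finset.univ, HasDerivAt (fun t : ℝ => a * c * v j ^ 2 / (t * a * v j + c) ^ 2)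
      (-(2 * a ^ 2 * c * v j ^ 3 / (τ * a * v j + c) ^ 3)) τ := by
    intro j _
    have hden : HasDerivAt (fun t : ℝ => t * a * v j + c) (1 * a * v j) τ :=
      (((hasDerivAt_id τ).mul_const a).mul_const (v j)).add_const c
    have h2 := (hasDerivAt_const τ (a * c * v j ^ 2)).fun_div (hden.pow 2)
      (pow_ne_zero 2 (hx j))
    simp only [Pi.pow_apply] at h2
    refine h2.congr_deriv ?_
    rw [← neg_div, div_eq_div_iff (pow_ne_zero 2 (pow_ne_zero 2 (hx j)))
      (pow_ne_zero 3 (hx j))]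
    norm_num
    ring
  have := HasDerivAt.fun_sum h
  simpa [Finset.sum_neg_distrib] using this

private lemma key_ineq (n : ℕ) (a c γ β : ℝ) (ha : 0 < a) (hc : 0 < c)
    (hγ : 0 < γ) (hβ : 0 < β) (v : Fin n → ℝ) (hv : ∀ j, 0 < v j) (τ : ℝ)
    (hx : ∀ j, 0 < τ * a * v j + c) :
    2 * β * (∑ j, a * c * v j ^ 2 / (τ * a * v j + c) ^ 2) ^ 2 ≤
      (∑ j, 2 * a ^ 2 * c * v j ^ 3 / (τ * a * v j + c) ^ 3) *
        (γ + β * ∑ j, v j * c / (τ * a * v j + c)) := by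
  set x : Fin n → ℝ := fun j => τ * a * v j + c with hxdef
  set f : Fin n → ℝ := fun j => Real.sqrt (v j * c / x j) with hfdef
  set g : Fin n → ℝ := fun j => (a * v j / x j) * f j with hgdef
  have hf2 : ∀ j, f j ^ 2 = v j * c / x j :=
    fun j => Real.sq_sqrt (div_nonneg (mul_nonneg (hv j).le hc.le) (hx j).le)
  have hfg : ∀ j, f j * g j = a * c * v j ^ 2 / (x j) ^ 2 := by
    intro j
    have : f j * g j = (a * v j / x j) * f j ^ 2 := by rw [hgdef]; ring
    rw [this, hf2]
    field_simp
  have hg2 : ∀ j, g j ^ 2 = a ^ 2 * c * v j ^ 3 / (x j) ^ 3 := by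
    intro j
    have : g j ^ 2 = (a * v j / x j) ^ 2 * f j ^ 2 := by rw [hgdef]; ring
    rw [this, hf2]
    have := (hx j).ne'
    field_simp
  have hCS := Finset.sum_mul_sq_le_sq_mul_sq univ f g
  rw [Finset.sum_congr rfl (fun j _ => hfg j)] at hCS
  rw [Finset.sum_congr rfl (fun j _ => hf2 j), Finset.sum_congr rfl (fun j _ => hg2 j)] at hCS
  have hU : 0 ≤ ∑ j, v j * c / x j :=
    Finset.sum_nonneg fun j _ => div_nonneg (mul_nonneg (hv j).le hc.le) (hx j).le
  have hT : 0 ≤ ∑ j, a ^ 2 * c * v j ^ 3 / (x j) ^ 3 :=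
    Finset.sum_nonneg fun j _ => div_nonneg
      (mul_nonneg (mul_nonneg (pow_nonneg ha.le 2) hc.le) (pow_nonneg (hv j).le 3))
      (pow_nonneg (hx j).le 3)
  have h2 : (∑ j, 2 * a ^ 2 * c * v j ^ 3 / (x j) ^ 3)
      = 2 * ∑ j, a ^ 2 * c * v j ^ 3 / (x j) ^ 3 := by
    rw [Finset.mul_sum]
    exact Finset.sum_congr rfl fun j _ => by ring
  rw [h2]
  nlinarith [hCS, hU, hT, hγ.le, hβ.le]

/-- With `u(τ) = Σ_j v_j c/(τ a v_j + c)` and `S = Σ_j v_j`, the function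
`𝒦(τ) = (S - u(τ))/(γ + β u(τ))` is strictly increasing and concave on `[0,∞)`,
vanishes at `0`, and is positive on `(0,∞)`. -/
theorem stmt_12 (n : ℕ) (hn : 1 ≤ n) (a c γ β : ℝ)
    (ha : 0 < a) (hc : 0 < c) (hγ : 0 < γ) (hβ : 0 < β)
    (v : Fin n → ℝ) (hv : ∀ j, 0 < v j) :
    StrictMonoOn (fun τ : ℝ => ((∑ j, v j) - ∑ j, v j * c / (τ * a * v j + c)) /
      (γ + β * ∑ j, v j * c / (τ * a * v j + c))) (Set.Ici 0) ∧
    ConcaveOn ℝ (Set.Ici 0) (fun τ : ℝ => ((∑ j, v j) - ∑ j, v j * c / (τ * a * v j + c)) /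
      (γ + β * ∑ j, v j * c / (τ * a * v j + c))) ∧
    ((∑ j, v j) - ∑ j, v j * c / ((0 : ℝ) * a * v j + c)) /
      (γ + β * ∑ j, v j * c / ((0 : ℝ) * a * v j + c)) = 0 ∧
    ∀ τ : ℝ, 0 < τ →
      0 < ((∑ j, v j) - ∑ j, v j * c / (τ * a * v j + c)) /
        (γ + β * ∑ j, v j * c / (τ * a * v j + c)) := by
  haveI : Nonempty (Fin n) := ⟨⟨0, hn⟩⟩
  -- basic positivity facts
  have hx : ∀ τ : ℝ, 0 ≤ τ → ∀ j, 0 < τ * a * v j + c := fun τ hτ j =>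
    add_pos_of_nonneg_of_pos (mul_nonneg (mul_nonneg hτ ha.le) (hv j).le) hc
  have hU : ∀ τ : ℝ, 0 ≤ τ → 0 ≤ ∑ j, v j * c / (τ * a * v j + c) := fun τ hτ =>
    Finset.sum_nonneg fun j _ =>
      div_nonneg (mul_nonneg (hv j).le hc.le) (hx τ hτ j).le
  have hD : ∀ τ : ℝ, 0 ≤ τ → 0 < γ + β * ∑ j, v j * c / (τ * a * v j + c) := fun τ hτ =>
    add_pos_of_pos_of_nonneg hγ (mul_nonneg hβ.le (hU τ hτ))
  have hW : ∀ τ : ℝ, 0 ≤ τ → 0 < ∑ j, a * c * v j ^ 2 / (τ * a * v j + c) ^ 2 := fun τ hτ =>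
    Finset.sum_pos (fun j _ => div_pos
      (mul_pos (mul_pos ha hc) (pow_pos (hv j) 2)) (pow_pos (hx τ hτ j) 2))
      Finset.univ_nonempty
  have hS : 0 < ∑ j, v j := Finset.sum_pos (fun j _ => hv j) Finset.univ_nonempty
  -- continuity
  have hu_cont : ContinuousOn (fun t : ℝ => ∑ j, v j * c / (t * a * v j + c)) (Set.Ici 0) :=
    continuousOn_finset_sum _ fun j _ =>
      ContinuousOn.div continuousOn_const
        ((((continuous_id.mul continuous_const).mul continuous_const).add
          continuous_const).continuousOn)
        (fun t ht => (hx t ht j).ne')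
  have hcont : ContinuousOn (fun τ : ℝ =>
      ((∑ j, v j) - ∑ j, v j * c / (τ * a * v j + c)) /
        (γ + β * ∑ j, v j * c / (τ * a * v j + c))) (Set.Ici 0) :=
    ContinuousOn.div (continuousOn_const.sub hu_cont)
      (continuousOn_const.add (continuousOn_const.mul hu_cont))
      (fun t ht => (hD t ht).ne')
  -- first derivative
  have hder : ∀ τ : ℝ, 0 ≤ τ → HasDerivAt
      (fun τ : ℝ => ((∑ j, v j) - ∑ j, v j * c / (τ * a * v j + c)) /
        (γ + β * ∑ j, v j * c / (τ * a * v j + c)))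
      ((γ + β * ∑ j, v j) * ((∑ j, a * c * v j ^ 2 / (τ * a * v j + c) ^ 2) /
        (γ + β * ∑ j, v j * c / (τ * a * v j + c)) ^ 2)) τ := by
    intro τ hτ
    have hne : ∀ j, τ * a * v j + c ≠ 0 := fun j => (hx τ hτ j).ne'
    have hu := hasDerivAt_u' n a c v τ hne
    have hN := hu.const_sub (∑ j, v j)
    have hDd := (hu.const_mul β).const_add γ
    have hDne := (hD τ hτ).ne'
    have h : HasDerivAt
        (fun t : ℝ => ((∑ j, v j) - ∑ j, v j * c / (t * a * v j + c)) /
          (γ + β * ∑ j, v j * c / (t * a * v j + c)))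
        ((-(-∑ j, a * c * v j ^ 2 / (τ * a * v j + c) ^ 2) *
            (γ + β * ∑ j, v j * c / (τ * a * v j + c)) -
          ((∑ j, v j) - ∑ j, v j * c / (τ * a * v j + c)) *
            (β * -∑ j, a * c * v j ^ 2 / (τ * a * v j + c) ^ 2)) /
          (γ + β * ∑ j, v j * c / (τ * a * v j + c)) ^ 2) τ := hN.div hDd hDne
    have heq : ((-(-∑ j, a * c * v j ^ 2 / (τ * a * v j + c) ^ 2) *
            (γ + β * ∑ j, v j * c / (τ * a * v j + c)) -
          ((∑ j, v j) - ∑ j, v j * c / (τ * a * v j + c)) *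
            (β * -∑ j, a * c * v j ^ 2 / (τ * a * v j + c) ^ 2)) /
          (γ + β * ∑ j, v j * c / (τ * a * v j + c)) ^ 2)
        = (γ + β * ∑ j, v j) * ((∑ j, a * c * v j ^ 2 / (τ * a * v j + c) ^ 2) /
          (γ + β * ∑ j, v j * c / (τ * a * v j + c)) ^ 2) := by
      rw [mul_div_assoc']
      congr 1
      ring
    exact heq ▸ h
  refine ⟨?_, ?_, ?_, ?_⟩
  · -- strict monotonicity
    refine strictMonoOn_of_deriv_pos (convex_Ici 0) hcont ?_
    intro x hx'
    rw [interior_Ici] at hx'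
    rw [(hder x hx'.le).deriv]
    exact mul_pos (add_pos hγ (mul_pos hβ hS))
      (div_pos (hW x hx'.le) (pow_pos (hD x hx'.le) 2))
  · -- concavity
    refine concaveOn_of_hasDerivWithinAt2_nonpos (f' := fun τ : ℝ =>
        (γ + β * ∑ j, v j) * ((∑ j, a * c * v j ^ 2 / (τ * a * v j + c) ^ 2) /
          (γ + β * ∑ j, v j * c / (τ * a * v j + c)) ^ 2))
      (f'' := fun τ : ℝ =>
        (γ + β * ∑ j, v j) *
          ((2 * β * (∑ j, a * c * v j ^ 2 / (τ * a * v j + c) ^ 2) ^ 2 -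
            (∑ j, 2 * a ^ 2 * c * v j ^ 3 / (τ * a * v j + c) ^ 3) *
              (γ + β * ∑ j, v j * c / (τ * a * v j + c))) /
            (γ + β * ∑ j, v j * c / (τ * a * v j + c)) ^ 3))
      (convex_Ici 0) hcont ?_ ?_ ?_
    · intro x hx'
      rw [interior_Ici] at hx'
      exact (hder x hx'.le).hasDerivWithinAt
    · intro x hx'
      rw [interior_Ici] at hx'
      have hτ : 0 ≤ x := le_of_lt hx'
      have hne : ∀ j, x * a * v j + c ≠ 0 := fun j => (hx x hτ j).ne'
      have hu := hasDerivAt_u' n a c v x hne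
      have hWd := hasDerivAt_W' n a c v x hne
      have hDd := (hu.const_mul β).const_add γ
      have hDne := (hD x hτ).ne'
      have hq : HasDerivAt
          (fun t : ℝ => (∑ j, a * c * v j ^ 2 / (t * a * v j + c) ^ 2) /
            (γ + β * ∑ j, v j * c / (t * a * v j + c)) ^ 2)
          (((-∑ j, 2 * a ^ 2 * c * v j ^ 3 / (x * a * v j + c) ^ 3) *
              (γ + β * ∑ j, v j * c / (x * a * v j + c)) ^ 2 -
            (∑ j, a * c * v j ^ 2 / (x * a * v j + c) ^ 2) *
              ((2 : ℕ) * (γ + β * ∑ j, v j * c / (x * a * v j + c)) ^ 1 *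
                (β * -∑ j, a * c * v j ^ 2 / (x * a * v j + c) ^ 2))) /
            ((γ + β * ∑ j, v j * c / (x * a * v j + c)) ^ 2) ^ 2) x :=
        hWd.div (hDd.pow 2) (pow_ne_zero 2 hDne)
      have hF1 := hq.const_mul (γ + β * ∑ j, v j)
      have heq : (γ + β * ∑ j, v j) *
          ((((-∑ j, 2 * a ^ 2 * c * v j ^ 3 / (x * a * v j + c) ^ 3) *
              (γ + β * ∑ j, v j * c / (x * a * v j + c)) ^ 2 -
            (∑ j, a * c * v j ^ 2 / (x * a * v j + c) ^ 2) *
              ((2 : ℕ) * (γ + β * ∑ j, v j * c / (x * a * v j + c)) ^ 1 *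
                (β * -∑ j, a * c * v j ^ 2 / (x * a * v j + c) ^ 2)))) /
            ((γ + β * ∑ j, v j * c / (x * a * v j + c)) ^ 2) ^ 2)
          = (γ + β * ∑ j, v j) *
          ((2 * β * (∑ j, a * c * v j ^ 2 / (x * a * v j + c) ^ 2) ^ 2 -
            (∑ j, 2 * a ^ 2 * c * v j ^ 3 / (x * a * v j + c) ^ 3) *
              (γ + β * ∑ j, v j * c / (x * a * v j + c))) /
            (γ + β * ∑ j, v j * c / (x * a * v j + c)) ^ 3) := by
        congr 1
        rw [div_eq_div_iff (pow_ne_zero 2 (pow_ne_zero 2 hDne)) (pow_ne_zero 3 hDne)]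
        push_cast
        ring
      exact (heq ▸ hF1).hasDerivWithinAt
    · intro x hx'
      rw [interior_Ici] at hx'
      have hτ : 0 ≤ x := le_of_lt hx'
      have hkey := key_ineq n a c γ β ha hc hγ hβ v hv x (hx x hτ)
      have hnum : 2 * β * (∑ j, a * c * v j ^ 2 / (x * a * v j + c) ^ 2) ^ 2 -
          (∑ j, 2 * a ^ 2 * c * v j ^ 3 / (x * a * v j + c) ^ 3) *
            (γ + β * ∑ j, v j * c / (x * a * v j + c)) ≤ 0 := by linarith
      refine mul_nonpos_iff.mpr (Or.inl ⟨(add_pos hγ (mul_pos hβ hS)).le, ?_⟩)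
      exact div_nonpos_iff.mpr (Or.inr ⟨hnum, (pow_pos (hD x hτ) 3).le⟩)
  · -- value at zero
    have h0 : ∀ j : Fin n, v j * c / ((0 : ℝ) * a * v j + c) = v j := by
      intro j
      rw [zero_mul, zero_mul, zero_add, mul_div_assoc, div_self hc.ne', mul_one]
    simp only [h0, sub_self, zero_div]
  · -- positivity
    intro τ hτ
    apply div_pos _ (hD τ hτ.le)
    rw [sub_pos]
    refine Finset.sum_lt_sum_of_nonempty Finset.univ_nonempty fun j _ => ?_
    rw [div_lt_iff₀ (hx τ hτ.le j)]
    nlinarith [hv j, mul_pos (mul_pos hτ ha) (hv j)]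
end

section
/- Let T > 0 and let g : [0,T] → ℝ be nonnegative, nondecreasing and concave on [0,T]. Then the function h(τ) = (1 − τ/T)·g(τ) is concave on [0,T]. -/
/-- If `g` is nonnegative, nondecreasing and concave on `[0,T]`, then
`h(τ) = (1 - τ/T) g(τ)` is concave on `[0,T]`. -/
theorem stmt_14 (T : ℝ) (hT : 0 < T) (g : ℝ → ℝ)
    (hg_nonneg : ∀ τ ∈ Set.Icc 0 T, 0 ≤ g τ)
    (hg_mono : MonotoneOn g (Set.Icc 0 T))
    (hg_conc : ConcaveOn ℝ (Set.Icc 0 T) g) :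
    ConcaveOn ℝ (Set.Icc 0 T) (fun τ => (1 - τ / T) * g τ) := by
  have hf : ConcaveOn ℝ (Set.Icc 0 T) (fun τ : ℝ => 1 - τ / T) := by
    refine ⟨convex_Icc 0 T, fun x hx y hy a b ha hb hab => le_of_eq ?_⟩
    simp only [smul_eq_mul]
    field_simp
    linear_combination T * hab
  have hfmono : AntivaryOn (fun τ : ℝ => 1 - τ / T) g (Set.Icc 0 T) := by
    intro x hx y hy hxy
    have hxy' : x ≤ y := by
      by_contra h
      exact absurd (hg_mono hy hx (le_of_not_ge h)) (not_le.2 hxy)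
    have : x / T ≤ y / T := by gcongr
    simpa using sub_le_sub_left this 1
  have hfnn : ∀ ⦃τ⦄, τ ∈ Set.Icc 0 T → 0 ≤ 1 - τ / T := by
    intro τ hτ
    have : τ / T ≤ 1 := (div_le_one hT).2 hτ.2
    linarith
  exact hf.mul hg_conc hfnn (fun x hx => hg_nonneg x hx) hfmono
end
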